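/- Let A be a real symmetric positive semidefinite N×N matrix with A q = f solvable, and q⁰ ∈ ℝ^N. Suppose for each h > 0, δ > 0 we are given a real symmetric positive semidefinite N×N matrix A_h with ‖A_h − A‖ ≤ h and a vector f_δ with ‖f_δ − f‖ ≤ δ, and a parameter α(h,δ) > 0. Then for each h, δ the system (A_h + α(h,δ) I) q = f_δ + α(h,δ) q⁰ has a unique solution q^α_{hδ}; and if α(h,δ) → 0 and (h + δ)/α(h,δ) → 0 as h, δ → 0, then q^α_{hδ} converges to the solution of A q = f closest in Euclidean norm to q⁰ (the normal solution relative to q⁰). -/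

import Mathlib

open Matrix
open scoped Matrix.Norms.L2Operator

/-- Matrix–vector multiplication as a map between Euclidean spaces. -/
noncomputable def mulE {K N : ℕ} (A : Matrix (Fin K) (Fin N) ℝ)
    (v : EuclideanSpace ℝ (Fin N)) : EuclideanSpace ℝ (Fin K) :=
  Matrix.toEuclideanLin A v

open scoped RealInnerProductSpace

variable {N : ℕ}

lemma mulE_add (A B : Matrix (Fin N) (Fin N) ℝ) (v : EuclideanSpace ℝ (Fin N)) :
    mulE (A + B) v = mulE A v + mulE B v := by
  simp [mulE, map_add]

lemma mulE_smul_one (a : ℝ) (v : EuclideanSpace ℝ (Fin N)) :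
    mulE (a • (1 : Matrix (Fin N) (Fin N) ℝ)) v = a • v := by
  simp only [mulE, _root_.map_smul, LinearMap.smul_apply]
  congr 1
  apply (WithLp.equiv 2 _).injective
  simp [Matrix.toEuclideanLin_apply, Matrix.one_mulVec]

lemma mulE_one (v : EuclideanSpace ℝ (Fin N)) :
    mulE (1 : Matrix (Fin N) (Fin N) ℝ) v = v := by
  have := mulE_smul_one (N := N) 1 v
  simpa using this

lemma mulE_mul (A B : Matrix (Fin N) (Fin N) ℝ) (v : EuclideanSpace ℝ (Fin N)) :
    mulE (A * B) v = mulE A (mulE B v) := by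
  apply (WithLp.equiv 2 _).injective
  simp [mulE, Matrix.toEuclideanLin_apply, Matrix.mulVec_mulVec]

lemma mulE_map_sub (A : Matrix (Fin N) (Fin N) ℝ) (v w : EuclideanSpace ℝ (Fin N)) :
    mulE A (v - w) = mulE A v - mulE A w := by
  simp [mulE, map_sub]

lemma mulE_map_add (A : Matrix (Fin N) (Fin N) ℝ) (v w : EuclideanSpace ℝ (Fin N)) :
    mulE A (v + w) = mulE A v + mulE A w := by
  simp [mulE, map_add]

lemma mulE_map_smul (A : Matrix (Fin N) (Fin N) ℝ) (c : ℝ) (v : EuclideanSpace ℝ (Fin N)) :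
    mulE A (c • v) = c • mulE A v := by
  simp [mulE, _root_.map_smul]

lemma inner_mulE_self_nonneg {A : Matrix (Fin N) (Fin N) ℝ} (hA : A.PosSemidef)
    (v : EuclideanSpace ℝ (Fin N)) : 0 ≤ ⟪mulE A v, v⟫ := by
  have := hA.dotProduct_mulVec_nonneg (WithLp.equiv 2 _ v)
  simp only [star_trivial] at this
  rw [real_inner_comm]
  convert this using 1
  · rfl
  · simp [mulE, toEuclideanLin_apply, PiLp.inner_apply, dotProduct, mul_comm]

lemma norm_mulE_le (A : Matrix (Fin N) (Fin N) ℝ) (v : EuclideanSpace ℝ (Fin N)) :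
    ‖mulE A v‖ ≤ ‖A‖ * ‖v‖ :=
  Matrix.l2_opNorm_mulVec A v

/-- Coercivity of the regularized operator. -/
lemma coercive {A : Matrix (Fin N) (Fin N) ℝ} (hA : A.PosSemidef) {a : ℝ} (ha : 0 < a)
    (v : EuclideanSpace ℝ (Fin N)) :
    a * ‖v‖ ≤ ‖mulE (A + a • (1 : Matrix (Fin N) (Fin N) ℝ)) v‖ := by
  have h1 : ⟪mulE (A + a • (1 : Matrix (Fin N) (Fin N) ℝ)) v, v⟫
      = ⟪mulE A v, v⟫ + a * (‖v‖ ^ 2) := by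
    rw [mulE_add, mulE_smul_one, inner_add_left, real_inner_smul_left,
      real_inner_self_eq_norm_sq]
  have h2 := inner_mulE_self_nonneg hA v
  have h3 := real_inner_le_norm (mulE (A + a • (1 : Matrix (Fin N) (Fin N) ℝ)) v) v
  rcases eq_or_ne v 0 with rfl | hv
  · simp
  · have hv' : 0 < ‖v‖ := norm_pos_iff.mpr hv
    nlinarith [norm_nonneg (mulE (A + a • (1 : Matrix (Fin N) (Fin N) ℝ)) v)]

/-- If `(A + aI) v = A u` then `‖v‖ ≤ ‖u‖`. -/
lemma norm_le_of_reg_eq {A : Matrix (Fin N) (Fin N) ℝ} (hA : A.PosSemidef) {a : ℝ}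
    (ha : 0 < a) {u v : EuclideanSpace ℝ (Fin N)}
    (h : mulE (A + a • (1 : Matrix (Fin N) (Fin N) ℝ)) v = mulE A u) : ‖v‖ ≤ ‖u‖ := by
  rw [mulE_add, mulE_smul_one] at h
  have hav : a • v = mulE A (u - v) := by
    rw [mulE_map_sub, ← h]; abel
  have h0 := inner_mulE_self_nonneg hA (u - v)
  rw [← hav, real_inner_smul_left] at h0
  have h2 : 0 ≤ ⟪v, u - v⟫ := nonneg_of_mul_nonneg_right h0 ha
  rw [inner_sub_right] at h2
  have h3 := real_inner_le_norm v u
  have h4 : ⟪v, v⟫ = ‖v‖ ^ 2 := real_inner_self_eq_norm_sq v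
  nlinarith [norm_nonneg v, norm_nonneg u]

/-- The regularized matrix is positive definite. -/
lemma reg_posDef {A : Matrix (Fin N) (Fin N) ℝ} (hA : A.PosSemidef) {a : ℝ} (ha : 0 < a) :
    (A + a • (1 : Matrix (Fin N) (Fin N) ℝ)).PosDef := by
  refine Matrix.PosDef.posSemidef_add hA ?_
  rw [Matrix.smul_one_eq_diagonal]
  exact Matrix.posDef_diagonal_iff.mpr fun _ => ha

lemma mulE_inv_cancel {B : Matrix (Fin N) (Fin N) ℝ} (hB : B.PosDef)
    (g : EuclideanSpace ℝ (Fin N)) : mulE B (mulE B⁻¹ g) = g := by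
  rw [← mulE_mul, Matrix.mul_nonsing_inv B ((Matrix.isUnit_iff_isUnit_det B).mp hB.isUnit),
    mulE_one]

/-- Symmetry of the quadratic form of a hermitian matrix, as inner products. -/
lemma inner_mulE_symm {A : Matrix (Fin N) (Fin N) ℝ} (hA : A.IsHermitian)
    (x y : EuclideanSpace ℝ (Fin N)) : ⟪mulE A x, y⟫ = ⟪x, mulE A y⟫ := by
  have := (Matrix.isHermitian_iff_isSymmetric (A := A)).mp hA
  exact this x y

/-- The normal solution difference lies in the range of `A`. -/
lemma normal_sub_mem_range {A : Matrix (Fin N) (Fin N) ℝ} (hA : A.PosSemidef)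
    {f : EuclideanSpace ℝ (Fin N)} {q0 qn : EuclideanSpace ℝ (Fin N)}
    (hqn : mulE A qn = f ∧ ∀ p, mulE A p = f → ‖qn - q0‖ ≤ ‖p - q0‖) :
    ∃ u, mulE A u = qn - q0 := by
  -- Step 1: qn - q0 is orthogonal to the kernel of A
  have perp : ∀ z, mulE A z = 0 → ⟪qn - q0, z⟫ = 0 := by
    intro z hz
    rcases eq_or_ne z 0 with rfl | hz0
    · simp
    set w := qn - q0 with hw
    set c := ⟪w, z⟫ with hc
    have hz2 : (0:ℝ) < ‖z‖ ^ 2 := pow_pos (norm_pos_iff.mpr hz0) 2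
    set t : ℝ := -c / ‖z‖ ^ 2 with ht
    have hp : mulE A (qn + t • z) = f := by
      rw [mulE_map_add, mulE_map_smul, hz, smul_zero, add_zero, hqn.1]
    have hmin := hqn.2 _ hp
    have hrew : qn + t • z - q0 = w + t • z := by rw [hw]; abel
    rw [hrew] at hmin
    have hsq : ‖w + t • z‖ ^ 2 = ‖w‖ ^ 2 + 2 * (t * c) + t ^ 2 * ‖z‖ ^ 2 := by
      rw [norm_add_sq_real, real_inner_smul_right, norm_smul]
      rw [← hc]; ring_nf
      rw [Real.norm_eq_abs, sq_abs]
    have hmin2 : ‖w‖ ^ 2 ≤ ‖w + t • z‖ ^ 2 := by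
      have := norm_nonneg w
      nlinarith
    have htz : t * ‖z‖ ^ 2 = -c := by
      rw [ht]; field_simp
    nlinarith [sq_nonneg c]
  -- Step 2: decompose along range and its orthogonal complement
  set K : Submodule ℝ (EuclideanSpace ℝ (Fin N)) :=
    LinearMap.range (Matrix.toEuclideanLin A) with hK
  have memK : ∀ x : EuclideanSpace ℝ (Fin N), mulE A x ∈ K := fun x => ⟨x, rfl⟩
  obtain ⟨y, hy, z, hz, hv⟩ := K.exists_add_mem_mem_orthogonal (qn - q0)
  have hTz : mulE A z = 0 := by
    have h1 : ⟪mulE A (mulE A z), z⟫ = 0 :=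
      Submodule.inner_right_of_mem_orthogonal (memK (mulE A z)) hz
    have h2 : ⟪mulE A z, mulE A z⟫ = 0 :=
      (inner_mulE_symm hA.1 (mulE A z) z).symm.trans h1
    exact inner_self_eq_zero.mp h2
  have hperp := perp z hTz
  have hyz : ⟪y, z⟫ = 0 := Submodule.inner_right_of_mem_orthogonal hy hz
  have hz0 : z = 0 := by
    have hsum : ⟪qn - q0, z⟫ = ⟪y, z⟫ + ⟪z, z⟫ := by rw [hv, inner_add_left]
    rw [hperp, hyz] at hsum
    rw [zero_add] at hsum
    exact inner_self_eq_zero.mp hsum.symm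
  obtain ⟨u, hu⟩ := hy
  refine ⟨u, ?_⟩
  rw [hv, hz0, add_zero, ← hu]
  rfl

/-- The key quantitative estimate. -/
lemma key_estimate {A : Matrix (Fin N) (Fin N) ℝ} (hA : A.PosSemidef)
    {f q0 qn u : EuclideanSpace ℝ (Fin N)}
    (hqnf : mulE A qn = f) (hu : mulE A u = qn - q0)
    {M : Matrix (Fin N) (Fin N) ℝ} (hM : M.PosSemidef)
    {f1 : EuclideanSpace ℝ (Fin N)} {h δ a : ℝ}
    (hh : 0 < h) (hδ : 0 < δ) (ha : 0 < a)
    (hMA : ‖M - A‖ ≤ h) (hf1 : ‖f1 - f‖ ≤ δ) :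
    ‖mulE (M + a • (1 : Matrix (Fin N) (Fin N) ℝ))⁻¹ (f1 + a • q0) - qn‖
      ≤ ((h + δ) / a) * (1 + ‖qn‖) + (h + a) * ‖u‖ := by
  set Breg := A + a • (1 : Matrix (Fin N) (Fin N) ℝ) with hBregdef
  set B := M + a • (1 : Matrix (Fin N) (Fin N) ℝ) with hBdef
  have hBreg : Breg.PosDef := reg_posDef hA ha
  have hB : B.PosDef := reg_posDef hM ha
  set qa := mulE Breg⁻¹ (f + a • q0) with hqa
  set qh := mulE B⁻¹ (f1 + a • q0) with hqh
  have hqa1 : mulE Breg qa = f + a • q0 := mulE_inv_cancel hBreg _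
  have hqh1 : mulE B qh = f1 + a • q0 := mulE_inv_cancel hB _
  -- regularized minus normal solution
  have e1 : mulE Breg (qa - qn) = mulE A ((-a) • u) := by
    have hBregqn : mulE Breg qn = f + a • qn := by
      rw [hBregdef, mulE_add, mulE_smul_one, hqnf]
    rw [mulE_map_sub, hqa1, mulE_map_smul, hu, hBregqn]
    simp [smul_sub]
    abel
  have e2 : ‖qa - qn‖ ≤ a * ‖u‖ := by
    have := norm_le_of_reg_eq hA ha e1
    rwa [norm_smul, Real.norm_eq_abs, abs_neg, abs_of_pos ha] at this
  have e3 : ‖qa‖ ≤ ‖qn‖ + a * ‖u‖ := by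
    have h1 := norm_sub_norm_le qa qn
    linarith
  -- perturbed minus regularized
  have e4 : mulE B (qh - qa) = (f1 - f) - mulE (M - A) qa := by
    have hsplit : mulE B qa = mulE Breg qa + mulE (M - A) qa := by
      rw [← mulE_add]
      congr 1
      rw [hBdef, hBregdef]
      abel
    rw [mulE_map_sub, hqh1, hsplit, hqa1]
    abel
  have e5 : a * ‖qh - qa‖ ≤ δ + h * ‖qa‖ := by
    calc a * ‖qh - qa‖ ≤ ‖mulE B (qh - qa)‖ := coercive hM ha _
      _ = ‖(f1 - f) - mulE (M - A) qa‖ := by rw [e4]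
      _ ≤ ‖f1 - f‖ + ‖mulE (M - A) qa‖ := norm_sub_le _ _
      _ ≤ δ + h * ‖qa‖ := add_le_add hf1 (le_trans (norm_mulE_le _ _)
            (mul_le_mul_of_nonneg_right hMA (norm_nonneg _)))
  -- combine
  have tri : ‖qh - qn‖ ≤ ‖qh - qa‖ + ‖qa - qn‖ := norm_sub_le_norm_sub_add_norm_sub qh qa qn
  rw [← mul_le_mul_iff_right₀ ha]
  have expand : a * (((h + δ) / a) * (1 + ‖qn‖) + (h + a) * ‖u‖)
      = (h + δ) * (1 + ‖qn‖) + a * ((h + a) * ‖u‖) := by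
    field_simp
  rw [expand]
  have t1 := mul_le_mul_of_nonneg_left tri ha.le
  rw [mul_add] at t1
  have t2 := mul_le_mul_of_nonneg_left e2 ha.le
  have t3 := mul_le_mul_of_nonneg_left e3 hh.le
  nlinarith [norm_nonneg u, norm_nonneg qn, norm_nonneg qa, hh.le, hδ.le, ha.le]

/-- **Lavrentiev regularization with perturbed data.** For symmetric positive
semidefinite data `A_h` with `‖A_h - A‖ ≤ h` (L² operator norm) and `f_δ` with
`‖f_δ - f‖ ≤ δ`, each system `(A_h + α(h,δ) I) q = f_δ + α(h,δ) q⁰` has a unique solution,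
and if `α(h,δ) → 0` and `(h + δ)/α(h,δ) → 0` as `h, δ → 0⁺`, the solutions converge to the
solution of `A q = f` closest to `q⁰`. -/
theorem lavrentiev_perturbed_tendsto_normal_solution
    (N : ℕ) (A : Matrix (Fin N) (Fin N) ℝ) (hA : A.PosSemidef)
    (f : EuclideanSpace ℝ (Fin N)) (hsolv : ∃ q, mulE A q = f)
    (q0 qn : EuclideanSpace ℝ (Fin N))
    (hqn : mulE A qn = f ∧ ∀ p, mulE A p = f → ‖qn - q0‖ ≤ ‖p - q0‖)
    (Ah : ℝ → Matrix (Fin N) (Fin N) ℝ) (fδ : ℝ → EuclideanSpace ℝ (Fin N))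
    (α : ℝ → ℝ → ℝ)
    (hAh : ∀ h : ℝ, 0 < h → (Ah h).PosSemidef ∧ ‖Ah h - A‖ ≤ h)
    (hfδ : ∀ δ : ℝ, 0 < δ → ‖fδ δ - f‖ ≤ δ)
    (hα : ∀ h δ : ℝ, 0 < h → 0 < δ → 0 < α h δ) :
    (∀ h δ : ℝ, 0 < h → 0 < δ →
        ∃! q : EuclideanSpace ℝ (Fin N),
          mulE (Ah h + α h δ • (1 : Matrix (Fin N) (Fin N) ℝ)) q = fδ δ + α h δ • q0) ∧
      (Filter.Tendsto (fun p : ℝ × ℝ => α p.1 p.2)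
          (nhdsWithin 0 (Set.Ioi 0) ×ˢ nhdsWithin 0 (Set.Ioi 0)) (nhds 0) →
        Filter.Tendsto (fun p : ℝ × ℝ => (p.1 + p.2) / α p.1 p.2)
          (nhdsWithin 0 (Set.Ioi 0) ×ˢ nhdsWithin 0 (Set.Ioi 0)) (nhds 0) →
        Filter.Tendsto
          (fun p : ℝ × ℝ =>
            mulE ((Ah p.1 + α p.1 p.2 • (1 : Matrix (Fin N) (Fin N) ℝ))⁻¹)
              (fδ p.2 + α p.1 p.2 • q0))
          (nhdsWithin 0 (Set.Ioi 0) ×ˢ nhdsWithin 0 (Set.Ioi 0)) (nhds qn)) := by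
  constructor
  · -- unique solvability
    intro h δ hh hδ
    have hB : (Ah h + α h δ • (1 : Matrix (Fin N) (Fin N) ℝ)).PosDef :=
      reg_posDef (hAh h hh).1 (hα h δ hh hδ)
    refine ⟨mulE (Ah h + α h δ • (1 : Matrix (Fin N) (Fin N) ℝ))⁻¹ (fδ δ + α h δ • q0),
      mulE_inv_cancel hB _, ?_⟩
    intro q hq
    -- uniqueness via coercivity
    have hq' : mulE (Ah h + α h δ • (1 : Matrix (Fin N) (Fin N) ℝ))
        (q - mulE (Ah h + α h δ • (1 : Matrix (Fin N) (Fin N) ℝ))⁻¹ (fδ δ + α h δ • q0)) = 0 := by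
      rw [mulE_map_sub, hq, mulE_inv_cancel hB, sub_self]
    have := coercive (hAh h hh).1 (hα h δ hh hδ)
      (q - mulE (Ah h + α h δ • (1 : Matrix (Fin N) (Fin N) ℝ))⁻¹ (fδ δ + α h δ • q0))
    rw [hq', norm_zero] at this
    have hpos := hα h δ hh hδ
    have : ‖q - mulE (Ah h + α h δ • (1 : Matrix (Fin N) (Fin N) ℝ))⁻¹ (fδ δ + α h δ • q0)‖ = 0 := by
      nlinarith [norm_nonneg (q - mulE (Ah h + α h δ • (1 : Matrix (Fin N) (Fin N) ℝ))⁻¹ (fδ δ + α h δ • q0))]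
    exact sub_eq_zero.mp (norm_eq_zero.mp this)
  · -- convergence
    intro hαt hqt
    obtain ⟨u, hu⟩ := normal_sub_mem_range hA hqn
    set F := nhdsWithin (0:ℝ) (Set.Ioi 0) ×ˢ nhdsWithin (0:ℝ) (Set.Ioi 0) with hF
    have hev : ∀ᶠ p : ℝ × ℝ in F, 0 < p.1 ∧ 0 < p.2 := by
      filter_upwards [Filter.prod_mem_prod (self_mem_nhdsWithin) (self_mem_nhdsWithin)] with p hp
      exact ⟨hp.1, hp.2⟩
    -- the error bound
    set ε : ℝ × ℝ → ℝ := fun p =>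
      ((p.1 + p.2) / α p.1 p.2) * (1 + ‖qn‖) + (p.1 + α p.1 p.2) * ‖u‖ with hε
    have hεt : Filter.Tendsto ε F (nhds 0) := by
      have t3 : Filter.Tendsto (fun p : ℝ × ℝ => p.1) F (nhds 0) :=
        Filter.tendsto_fst.mono_right nhdsWithin_le_nhds
      have := ((hqt.mul_const (1 + ‖qn‖)).add ((t3.add hαt).mul_const ‖u‖))
      simpa using this
    rw [← tendsto_sub_nhds_zero_iff]
    refine squeeze_zero_norm' ?_ hεt
    filter_upwards [hev] with p hp
    exact key_estimate hA hqn.1 hu (hAh p.1 hp.1).1 hp.1 hp.2 (hα p.1 p.2 hp.1 hp.2)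
      (hAh p.1 hp.1).2 (hfδ p.2 hp.2)
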